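/- Let G = (V,E) be a finite simple undirected graph with m ≥ 1 edges and maximum degree at most 2. Let (X_e)_{e∈E} be pairwise independent {0,1}-valued random variables on a finite probability space, each with Pr[X_e = 1] = 1/4. Then there exists an outcome ω of positive probability such that |M(X(ω))| ≥ m/8; in particular, the sample space contains an assignment of bits to the edges inducing a matching of size at least m/8. -/

import Mathlib

open MeasureTheory

open scoped Classical in
/-- For a 0-1 assignment `x` on the edges, `matchSet G x` is the set of edges `e` of `G` with
`x e = 1` and `x e' = 0` for every edge `e' ≠ e` sharing an endpoint with `e`;
it is a matching of `G`. -/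
noncomputable def matchSet {V : Type*} [Fintype V] [DecidableEq V]
    (G : SimpleGraph V) [DecidableRel G.Adj] (x : Sym2 V → ℝ) : Finset (Sym2 V) :=
  G.edgeFinset.filter (fun e => x e = 1 ∧
    ∀ e' ∈ G.edgeFinset, e' ≠ e → (∃ v, v ∈ e ∧ v ∈ e') → x e' = 0)

private lemma measure_finset_eq_sum {Ω : Type*} [MeasurableSpace Ω] [MeasurableSingletonClass Ω]
    (μ : Measure Ω) (s : Finset Ω) : μ ↑s = ∑ ω ∈ s, μ {ω} := by
  have h : (↑s : Set Ω) = ⋃ ω ∈ s, {ω} := by ext x; simp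
  rw [h, measure_biUnion_finset]
  · intro a _ b _ hab
    simp only [Set.disjoint_singleton]; exact hab
  · intro b _; exact measurableSet_singleton b

/-- On a finite probability space, pairwise independent 0-1 edge variables with success
probability `1/4` yield, with positive probability, an outcome whose induced matching has
size at least `m/8`. -/
theorem exists_outcome_large_matching
    {V : Type*} [Fintype V] [DecidableEq V]
    (G : SimpleGraph V) [DecidableRel G.Adj]
    (hdeg : ∀ v, G.degree v ≤ 2) (hm : 1 ≤ G.edgeFinset.card)
    {Ω : Type*} [Fintype Ω] [MeasureSpace Ω] [MeasurableSingletonClass Ω]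
    [IsProbabilityMeasure (volume : Measure Ω)]
    (X : Sym2 V → Ω → ℝ) (hmeas : ∀ e, Measurable (X e))
    (h01 : ∀ e ω, X e ω = 0 ∨ X e ω = 1)
    (hprob : ∀ e ∈ G.edgeFinset, (volume {ω | X e ω = 1}).toReal = 1 / 4)
    (hpind : ∀ e ∈ G.edgeFinset, ∀ e' ∈ G.edgeFinset, e ≠ e' →
      ProbabilityTheory.IndepFun (X e) (X e') volume) :
    ∃ ω : Ω, 0 < volume ({ω} : Set Ω) ∧
      (G.edgeFinset.card : ℝ) / 8 ≤ ((matchSet G (fun e => X e ω)).card : ℝ) := by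
  classical
  set μ : Measure Ω := volume with hμ
  set E : Finset (Sym2 V) := G.edgeFinset with hE
  set p : Ω → ℝ := fun ω => (μ {ω}).toReal with hp
  have hμfin : ∀ s : Set Ω, μ s ≠ ⊤ := fun s => measure_ne_top μ s
  have hp0 : ∀ ω, 0 ≤ p ω := fun ω => ENNReal.toReal_nonneg
  -- total probability 1
  have hsum1 : ∑ ω, p ω = 1 := by
    have h1 : μ (↑(Finset.univ : Finset Ω)) = ∑ ω, μ {ω} :=
      measure_finset_eq_sum μ Finset.univ
    have h2 : μ (↑(Finset.univ : Finset Ω)) = 1 := by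
      simp [measure_univ]
    have h3 : (∑ ω, μ {ω}).toReal = ∑ ω, p ω := by
      rw [ENNReal.toReal_sum]
      intro a _; exact hμfin _
    rw [← h3, ← h1, h2, ENNReal.toReal_one]
  -- the predicate defining matchSet
  set pred : Sym2 V → Ω → Prop := fun e ω => X e ω = 1 ∧
    ∀ e' ∈ E, e' ≠ e → (∃ v, v ∈ e ∧ v ∈ e') → X e' ω = 0 with hpred
  have hmatch : ∀ ω, matchSet G (fun e => X e ω) = E.filter (fun e => pred e ω) := by
    intro ω; rfl
  -- event sets
  set A : Sym2 V → Finset Ω := fun e => Finset.univ.filter (fun ω => pred e ω) with hA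
  -- expectation identity
  have hexp : ∑ ω, p ω * ((matchSet G (fun e => X e ω)).card : ℝ)
      = ∑ e ∈ E, (μ ↑(A e)).toReal := by
    have hcard : ∀ ω, ((matchSet G (fun e => X e ω)).card : ℝ)
        = ∑ e ∈ E, (if pred e ω then (1:ℝ) else 0) := by
      intro ω
      rw [hmatch ω, Finset.card_filter]
      push_cast
      rfl
    calc ∑ ω, p ω * ((matchSet G (fun e => X e ω)).card : ℝ)
        = ∑ ω, ∑ e ∈ E, p ω * (if pred e ω then (1:ℝ) else 0) := by
          refine Finset.sum_congr rfl fun ω _ => ?_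
          rw [hcard ω, Finset.mul_sum]
      _ = ∑ e ∈ E, ∑ ω, p ω * (if pred e ω then (1:ℝ) else 0) := Finset.sum_comm
      _ = ∑ e ∈ E, (μ ↑(A e)).toReal := by
          refine Finset.sum_congr rfl fun e _ => ?_
          rw [measure_finset_eq_sum μ (A e), ENNReal.toReal_sum (fun a _ => hμfin _)]
          rw [← Finset.sum_filter_add_sum_filter_not Finset.univ (fun ω => pred e ω)]
          have : ∑ ω ∈ Finset.univ.filter (fun ω => ¬ pred e ω),
              p ω * (if pred e ω then (1:ℝ) else 0) = 0 := by
            refine Finset.sum_eq_zero fun ω hω => ?_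
            rw [Finset.mem_filter] at hω
            simp [hω.2]
          rw [this, add_zero, hA]
          refine Finset.sum_congr rfl fun ω hω => ?_
          rw [Finset.mem_filter] at hω
          rw [if_pos hω.2, mul_one]
  -- per-edge lower bound
  have hedge : ∀ e ∈ E, (1:ℝ)/8 ≤ (μ ↑(A e)).toReal := by
    intro e he
    -- neighbors of e
    set N : Finset (Sym2 V) := E.filter (fun e' => e' ≠ e ∧ ∃ v, v ∈ e ∧ v ∈ e') with hN
    have hNcard : N.card ≤ 2 := by
      obtain ⟨a, b⟩ := e
      have hab : G.Adj a b := by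
        rw [hE, SimpleGraph.mem_edgeFinset, SimpleGraph.mem_edgeSet] at he
        exact he
      have hsub : N ⊆ (G.incidenceFinset a).erase s(a,b) ∪ (G.incidenceFinset b).erase s(a,b) := by
        intro e' he'
        rw [hN, Finset.mem_filter] at he'
        obtain ⟨heE, hne, v, hv1, hv2⟩ := he'
        have he'edge : e' ∈ G.edgeSet := by
          rw [hE, SimpleGraph.mem_edgeFinset] at heE; exact heE
        rw [Sym2.mem_iff] at hv1
        rcases hv1 with rfl | rfl
        · exact Finset.mem_union_left _ (Finset.mem_erase.2 ⟨hne,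
            (SimpleGraph.mem_incidenceFinset (G := G) _ e').2 ⟨he'edge, hv2⟩⟩)
        · exact Finset.mem_union_right _ (Finset.mem_erase.2 ⟨hne,
            (SimpleGraph.mem_incidenceFinset (G := G) _ e').2 ⟨he'edge, hv2⟩⟩)
      have hmema : s(a,b) ∈ G.incidenceFinset a :=
        (SimpleGraph.mem_incidenceFinset (G := G) a s(a,b)).2 ⟨hab, by simp⟩
      have hmemb : s(a,b) ∈ G.incidenceFinset b :=
        (SimpleGraph.mem_incidenceFinset (G := G) b s(a,b)).2 ⟨hab, by simp⟩
      have h1 : ((G.incidenceFinset a).erase s(a,b)).card ≤ 1 := by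
        rw [Finset.card_erase_of_mem hmema, SimpleGraph.card_incidenceFinset_eq_degree]
        have := hdeg a; omega
      have h2 : ((G.incidenceFinset b).erase s(a,b)).card ≤ 1 := by
        rw [Finset.card_erase_of_mem hmemb, SimpleGraph.card_incidenceFinset_eq_degree]
        have := hdeg b; omega
      have hc1 := Finset.card_le_card hsub
      have hc2 := Finset.card_union_le ((G.incidenceFinset a).erase s(a,b))
        ((G.incidenceFinset b).erase s(a,b))
      omega
    -- events
    set B : Set Ω := {ω | X e ω = 1} with hB
    set U : Set Ω := ⋃ e' ∈ N, (B ∩ {ω | X e' ω = 1}) with hU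
    have hsubset : B \ U ⊆ ↑(A e) := by
      intro ω hω
      obtain ⟨hωB, hωU⟩ := hω
      rw [hA]
      simp only [Finset.coe_filter, Set.mem_setOf_eq, Finset.mem_univ, true_and]
      refine ⟨hωB, fun e' he'E hne hshare => ?_⟩
      have he'N : e' ∈ N := by
        rw [hN, Finset.mem_filter]; exact ⟨he'E, hne, hshare⟩
      rcases h01 e' ω with h | h
      · exact h
      · exfalso
        apply hωU
        rw [hU]
        exact Set.mem_biUnion he'N ⟨hωB, h⟩
    -- measure bounds
    have hBval : (μ B).toReal = 1/4 := hprob e he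
    have hinter : ∀ e' ∈ N, (μ (B ∩ {ω | X e' ω = 1})).toReal = 1/16 := by
      intro e' he'
      rw [hN, Finset.mem_filter] at he'
      obtain ⟨he'E, hne, _⟩ := he'
      have hind := hpind e he e' he'E (Ne.symm hne)
      have hpre : B ∩ {ω | X e' ω = 1} = (X e) ⁻¹' {1} ∩ (X e') ⁻¹' {1} := by
        rw [hB]; rfl
      rw [hpre, hind.measure_inter_preimage_eq_mul {1} {1} (measurableSet_singleton 1)
        (measurableSet_singleton 1), ENNReal.toReal_mul]
      have h1 : (μ ((X e) ⁻¹' {1})).toReal = 1/4 := hprob e he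
      have h2 : (μ ((X e') ⁻¹' {1})).toReal = 1/4 := hprob e' he'E
      rw [h1, h2]; norm_num
    have hUbound : (μ U).toReal ≤ 1/8 := by
      have h1 : μ U ≤ ∑ e' ∈ N, μ (B ∩ {ω | X e' ω = 1}) := measure_biUnion_finset_le N _
      have h2 : (μ U).toReal ≤ (∑ e' ∈ N, μ (B ∩ {ω | X e' ω = 1})).toReal :=
        ENNReal.toReal_mono (by exact (ENNReal.sum_lt_top.2 fun a _ => (hμfin _).lt_top).ne) h1
      rw [ENNReal.toReal_sum (fun a _ => hμfin _)] at h2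
      calc (μ U).toReal ≤ ∑ e' ∈ N, (μ (B ∩ {ω | X e' ω = 1})).toReal := h2
        _ = ∑ e' ∈ N, (1:ℝ)/16 := Finset.sum_congr rfl hinter
        _ = N.card * (1/16) := by rw [Finset.sum_const, nsmul_eq_mul]
        _ ≤ 2 * (1/16) := by
            have : (N.card : ℝ) ≤ 2 := by exact_mod_cast hNcard
            nlinarith
        _ = 1/8 := by norm_num
    have hBdiff : (μ B).toReal ≤ (μ (B \ U)).toReal + (μ U).toReal := by
      have h1 : μ B ≤ μ (B \ U) + μ U := by
        calc μ B ≤ μ ((B \ U) ∪ U) := measure_mono (by intro x hx; by_cases hxU : x ∈ U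
                                                       · exact Or.inr hxU
                                                       · exact Or.inl ⟨hx, hxU⟩)
          _ ≤ μ (B \ U) + μ U := measure_union_le _ _
      have := ENNReal.toReal_mono (by
        exact (ENNReal.add_lt_top.2 ⟨(hμfin _).lt_top, (hμfin _).lt_top⟩).ne) h1
      rwa [ENNReal.toReal_add (hμfin _) (hμfin _)] at this
    have hmono : (μ (B \ U)).toReal ≤ (μ ↑(A e)).toReal :=
      ENNReal.toReal_mono (hμfin _) (measure_mono hsubset)
    linarith [hBval ▸ hBdiff]
  -- total lower bound on expectation
  have hlower : (E.card : ℝ)/8 ≤ ∑ ω, p ω * ((matchSet G (fun e => X e ω)).card : ℝ) := by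
    rw [hexp]
    calc (E.card : ℝ)/8 = ∑ _e ∈ E, (1:ℝ)/8 := by
          rw [Finset.sum_const, nsmul_eq_mul]; ring
      _ ≤ ∑ e ∈ E, (μ ↑(A e)).toReal := Finset.sum_le_sum hedge
  -- conclude by contradiction
  by_contra hcon
  push_neg at hcon
  have hall : ∀ ω, p ω * ((matchSet G (fun e => X e ω)).card : ℝ)
      ≤ p ω * ((E.card : ℝ)/8) := by
    intro ω
    by_cases hpω : 0 < μ ({ω} : Set Ω)
    · have := hcon ω hpω
      have hpos : 0 < p ω := ENNReal.toReal_pos hpω.ne' (hμfin _)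
      exact le_of_lt (by nlinarith)
    · have : μ ({ω} : Set Ω) = 0 := by
        by_contra h; exact hpω (lt_of_le_of_ne zero_le (Ne.symm h))
      simp [hp, this]
  obtain ⟨ω₀, hω₀⟩ : ∃ ω, 0 < p ω := by
    by_contra h
    push_neg at h
    have : ∑ ω, p ω = 0 := Finset.sum_eq_zero fun ω _ => le_antisymm (h ω) (hp0 ω)
    rw [hsum1] at this; norm_num at this
  have hω₀pos : 0 < μ ({ω₀} : Set Ω) := by
    by_contra h
    push_neg at h
    have : μ ({ω₀} : Set Ω) = 0 := le_antisymm h zero_le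
    rw [hp] at hω₀; simp [this] at hω₀
  have hstrict : p ω₀ * ((matchSet G (fun e => X e ω₀)).card : ℝ)
      < p ω₀ * ((E.card : ℝ)/8) := by
    have := hcon ω₀ hω₀pos
    nlinarith
  have hsumlt : ∑ ω, p ω * ((matchSet G (fun e => X e ω)).card : ℝ)
      < ∑ ω, p ω * ((E.card : ℝ)/8) :=
    Finset.sum_lt_sum (fun ω _ => hall ω) ⟨ω₀, Finset.mem_univ ω₀, hstrict⟩
  have hrhs : ∑ ω, p ω * ((E.card : ℝ)/8) = (E.card : ℝ)/8 := by
    rw [← Finset.sum_mul, hsum1, one_mul]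
  rw [hrhs] at hsumlt
  linarith
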